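/- Let h be a finite-dimensional simple real Lie algebra whose Killing form κ_h is negative definite (a compact simple Lie algebra), let g be a finite-dimensional real Lie algebra whose Killing form κ_g is negative definite, and let ι : h → g be an injective Lie algebra homomorphism. Then there exists a real constant c > 0 such that κ_g(ι(x), ι(y)) = c · κ_h(x, y) for all x, y ∈ h. (The constant c encodes the Dynkin index of the inclusion.) -/

import Mathlib

/-- For an injective homomorphism `ι : h → g` of a compact simple Lie algebra `h` into
a Lie algebra `g` with negative definite Killing form, the pullback of the Killing form
of `g` is a positive multiple of the Killing form of `h` (Dynkin index). -/
theorem killingForm_pullback_proportional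
    (h : Type*) [LieRing h] [LieAlgebra ℝ h] [FiniteDimensional ℝ h]
    (g : Type*) [LieRing g] [LieAlgebra ℝ g] [FiniteDimensional ℝ g]
    [LieAlgebra.IsSimple ℝ h]
    (hκh : ∀ x : h, x ≠ 0 → killingForm ℝ h x x < 0)
    (hκg : ∀ x : g, x ≠ 0 → killingForm ℝ g x x < 0)
    (ι : h →ₗ⁅ℝ⁆ g) (hι : Function.Injective ι) :
    ∃ c : ℝ, 0 < c ∧ ∀ x y : h,
      killingForm ℝ g (ι x) (ι y) = c * killingForm ℝ h x y := by
  classical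
  have hnontriv : Nontrivial h := by
    rcases subsingleton_or_nontrivial h with hs | hs
    · exact absurd (⟨fun x y => Subsingleton.elim _ _⟩ : IsLieAbelian h)
        (LieAlgebra.IsSimple.non_abelian ℝ)
    · exact hs
  -- nondegeneracy of the Killing form of h
  have hnd : (killingForm ℝ h).Nondegenerate := by
    constructor <;>
    · intro x hx
      by_contra h0
      exact (hκh x h0).ne (hx x)
  -- the pullback form
  set B : LinearMap.BilinForm ℝ h :=
    (killingForm ℝ g).compl₁₂ ι.toLinearMap ι.toLinearMap with hBdef
  have hB : ∀ x y : h, B x y = killingForm ℝ g (ι x) (ι y) := fun x y => rfl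
  have hBsymm : ∀ x y : h, B x y = B y x := fun x y =>
    LieModule.traceForm_comm ℝ g g (ι x) (ι y)
  -- the operator T with κ_h (T x) y = B x y
  set T : h →ₗ[ℝ] h :=
    ((killingForm ℝ h).toDual hnd).symm.toLinearMap ∘ₗ B with hTdef
  have hT : ∀ x y : h, killingForm ℝ h (T x) y = B x y := fun x y =>
    LinearMap.BilinForm.apply_toDual_symm_apply (hB := hnd) (B x) y
  -- separation
  have hsep : ∀ a b : h, (∀ y, killingForm ℝ h a y = killingForm ℝ h b y) → a = b := by
    intro a b hab
    have : ∀ y, killingForm ℝ h (a - b) y = 0 := by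
      intro y; rw [map_sub, LinearMap.sub_apply, hab y, sub_self]
    have := hnd.1 _ this
    exact sub_eq_zero.mp this
  -- T commutes with the adjoint action
  have hcomm : ∀ z x : h, T ⁅z, x⁆ = ⁅z, T x⁆ := by
    intro z x
    apply hsep
    intro y
    rw [hT]
    have h1 : B ⁅z, x⁆ y = -B x ⁅z, y⁆ := by
      simp only [hB, LieHom.map_lie]
      exact LieModule.traceForm_apply_lie_apply' ℝ g g (ι z) (ι x) (ι y)
    have h2 : killingForm ℝ h ⁅z, T x⁆ y = -(killingForm ℝ h) (T x) ⁅z, y⁆ :=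
      LieModule.traceForm_apply_lie_apply' ℝ h h z (T x) y
    rw [h1, h2, hT]
  -- inner product space structure from -κ_h
  letI c : InnerProductSpace.Core ℝ h :=
    { inner := fun x y => -(killingForm ℝ h x y)
      conj_inner_symm := fun x y => by
        simpa using congrArg Neg.neg (LieModule.traceForm_comm ℝ h h y x)
      re_inner_nonneg := fun x => by
        rcases eq_or_ne x 0 with rfl | hx
        · simp
        · simpa using (hκh x hx).le
      definite := fun x hx => by
        by_contra h0
        exact (hκh x h0).ne (by simpa [neg_eq_zero] using hx)
      add_left := fun x y z => by
        simp [map_add, LinearMap.add_apply, neg_add, add_comm]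
      smul_left := fun x y r => by
        simp [map_smul, LinearMap.smul_apply, mul_comm] }
  letI : NormedAddCommGroup h := c.toNormedAddCommGroup
  letI : InnerProductSpace ℝ h := InnerProductSpace.ofCore c.toCore
  have hinner : ∀ x y : h, (inner ℝ x y : ℝ) = -(killingForm ℝ h x y) := fun x y => rfl
  -- T is symmetric
  have hTsymm : T.IsSymmetric := by
    intro x y
    rw [hinner, hinner, hT, neg_inj]
    calc B x y = B y x := hBsymm x y
    _ = killingForm ℝ h (T y) x := (hT y x).symm
    _ = killingForm ℝ h x (T y) := LieModule.traceForm_comm ℝ h h (T y) x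
  -- T has a real eigenvalue
  obtain ⟨μ, v, hv⟩ : ∃ μ : ℝ, ∃ v, Module.End.HasEigenvector T μ v :=
    ⟨_, (hTsymm.hasEigenvalue_iSup_of_finiteDimensional).exists_hasEigenvector⟩
  -- the eigenspace is a Lie ideal, hence all of h
  let I : LieIdeal ℝ h :=
    { Module.End.eigenspace T μ with
      lie_mem := by
        intro z x hx
        have hx' : T x = μ • x := Module.End.mem_eigenspace_iff.mp hx
        exact Module.End.mem_eigenspace_iff.mpr (by rw [hcomm z x, hx', lie_smul]) }
  have hItop : I = ⊤ := by
    rcases LieAlgebra.IsSimple.eq_bot_or_eq_top I with hbot | htop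
    · exfalso
      have hvI : v ∈ I := hv.1
      rw [hbot] at hvI
      exact hv.2 (by simpa using hvI)
    · exact htop
  have hTall : ∀ x : h, T x = μ • x := by
    intro x
    have hx : x ∈ I := hItop ▸ LieSubmodule.mem_top x
    exact Module.End.mem_eigenspace_iff.mp hx
  -- conclude
  have key : ∀ x y : h, killingForm ℝ g (ι x) (ι y) = μ * killingForm ℝ h x y := by
    intro x y
    rw [← hB, ← hT, hTall x, map_smul, LinearMap.smul_apply, smul_eq_mul]
  refine ⟨μ, ?_, key⟩
  obtain ⟨x, hx⟩ := exists_ne (0 : h)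
  have hιx : ι x ≠ 0 := fun h0 => hx (hι (by simpa using h0))
  have h1 : killingForm ℝ g (ι x) (ι x) < 0 := hκg _ hιx
  have h2 : killingForm ℝ h x x < 0 := hκh x hx
  nlinarith [key x x]
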